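/- Suppose ν < λ = λ^ν < κ ≤ 2^λ are infinite cardinals with ν and κ regular. Then SNR⁻(κ,ν,E^κ_ν) holds: for every stationary T₀ ⊆ E^κ_ν, there exists a function φ : κ → ν such that for stationarily many α ∈ T₀, there is a club c in α on which φ is strictly increasing. -/

import Mathlib

open Cardinal Set Ordinal

/-- `C` is unbounded in `α`. -/
def UnbIn (C : Set Ordinal) (α : Ordinal) : Prop :=
  ∀ β < α, ∃ γ ∈ C, β < γ ∧ γ < α

/-- `C` is closed in `α`: every nonzero limit point of `C` below `α` belongs to `C`. -/
def ClosedIn (C : Set Ordinal) (α : Ordinal) : Prop :=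
  ∀ β < α, 0 < β → UnbIn C β → β ∈ C

/-- `C` is a club (closed unbounded) subset of `α`. -/
def ClubIn (C : Set Ordinal) (α : Ordinal) : Prop :=
  C ⊆ Set.Iio α ∧ ClosedIn C α ∧ UnbIn C α

/-- `S` is stationary in `α`. -/
def StatIn (S : Set Ordinal) (α : Ordinal) : Prop :=
  ∀ C, ClubIn C α → (S ∩ C).Nonempty

/-- The trace of `S` below `κ`: ordinals of uncountable cofinality in which `S` reflects. -/
def Tr (κ : Ordinal) (S : Set Ordinal) : Set Ordinal :=
  {β | β < κ ∧ Cardinal.aleph0 < β.cof ∧ StatIn (S ∩ Set.Iio β) β}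

/-- `E^κ_θ`, the set of ordinals below `κ` of cofinality `θ`. -/
def Ecof (κ : Ordinal) (θ : Cardinal) : Set Ordinal :=
  {α | α < κ ∧ α.cof = θ}

/-- The set of accumulation points of `C` that belong to `C`. -/
def accSet (C : Set Ordinal) : Set Ordinal :=
  {β ∈ C | 0 < β ∧ UnbIn C β}

/-- The order type of a set of ordinals: the unique ordinal whose initial segment
order-embeds onto the set. -/
noncomputable def otp (x : Set Ordinal) : Ordinal :=
  sInf {o : Ordinal | ∃ f : Ordinal → Ordinal,
    StrictMonoOn f (Set.Iio o) ∧ f '' Set.Iio o = x}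

/-- The partition principle `Prt(S, θ, T)` (computed inside `κ`). -/
def Prt (κ : Ordinal) (S : Set Ordinal) (θ : Cardinal) (T : Set Ordinal) : Prop :=
  ∃ P : Ordinal → Set Ordinal,
    (∀ i < θ.ord, P i ⊆ S) ∧
    Set.PairwiseDisjoint (Set.Iio θ.ord) P ∧
    (S ⊆ ⋃ i ∈ Set.Iio θ.ord, P i) ∧
    StatIn (T ∩ ⋂ i ∈ Set.Iio θ.ord, Tr κ (P i)) κ

/-- The principle `SNR⁻(κ, ν, T)`. -/
def SNRm (κ : Ordinal) (ν : Cardinal) (T : Set Ordinal) : Prop :=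
  ∀ T₀ ⊆ T ∩ Ecof κ ν, StatIn T₀ κ →
    ∃ φ : Ordinal → Ordinal, (∀ β < κ, φ β < ν.ord) ∧
      StatIn {α ∈ T₀ | ∃ c, ClubIn c α ∧ StrictMonoOn φ c} κ

/-- The simultaneous partition principle `Prp(S, ν, T)` (computed inside `κ`). -/
def Prp (κ : Ordinal) (S : Set Ordinal) (ν : Cardinal) (T : Set Ordinal) : Prop :=
  ∀ θ : Cardinal, θ ≤ ν →
    ∀ Si : Ordinal → Set Ordinal, (∀ i < θ.ord, Si i ⊆ S) →
      ∀ T' ⊆ T ∩ ⋂ i ∈ Set.Iio θ.ord, Tr κ (Si i), StatIn T' κ →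
        ∃ I : Set Ordinal, I ⊆ Set.Iio θ.ord ∧ (∀ j < θ.ord, ∃ i ∈ I, j ≤ i) ∧
          ∃ S' : Ordinal → Set Ordinal,
            (∀ i ∈ I, S' i ⊆ Si i) ∧
            (∀ i ∈ I, StatIn (S' i) κ) ∧
            Set.PairwiseDisjoint I S' ∧
            StatIn (T' ∩ ⋂ i ∈ I, Tr κ (S' i)) κ

/-- `⟨lams, f⟩` is a scale for the singular cardinal `lam`. -/
def IsScale (lam : Cardinal) (lams : Ordinal → Cardinal) (f : Ordinal → Ordinal → Ordinal) : Prop :=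
  (∀ i < lam.ord.cof.ord, (lams i).IsRegular) ∧
  (∀ i < lam.ord.cof.ord, ∀ j < lam.ord.cof.ord, i < j → lams i < lams j) ∧
  (∀ i < lam.ord.cof.ord, lams i < lam) ∧
  (∀ c < lam, ∃ i < lam.ord.cof.ord, c < lams i) ∧
  (∀ γ < (Order.succ lam).ord, ∀ i < lam.ord.cof.ord, f γ i < (lams i).ord) ∧
  (∀ γ < (Order.succ lam).ord, ∀ δ < (Order.succ lam).ord, γ < δ →
    ∃ i < lam.ord.cof.ord, ∀ j, i ≤ j → j < lam.ord.cof.ord → f γ j < f δ j) ∧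
  (∀ g : Ordinal → Ordinal, (∀ i < lam.ord.cof.ord, g i < (lams i).ord) →
    ∃ γ < (Order.succ lam).ord, ∃ i < lam.ord.cof.ord,
      ∀ j, i ≤ j → j < lam.ord.cof.ord → g j < f γ j)

/-- `α` is a very good point of the scale `f`. -/
def VeryGoodAt (lam : Cardinal) (f : Ordinal → Ordinal → Ordinal) (α : Ordinal) : Prop :=
  ∃ C, ClubIn C α ∧ ∃ i < lam.ord.cof.ord,
    ∀ γ ∈ C, ∀ δ ∈ C, γ < δ → ∀ j, i ≤ j → j < lam.ord.cof.ord → f γ j < f δ j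

/-- The least size of a family of `θ`-sized subsets of `ν` such that every club
in `ν` contains a member of the family. -/
noncomputable def CC (ν θ : Cardinal) : Cardinal :=
  sInf { c : Cardinal | ∃ 𝒞 : Ordinal → Set Ordinal,
    (∀ i < c.ord, 𝒞 i ⊆ Set.Iio ν.ord ∧ (otp (𝒞 i)).card = θ) ∧
    ∀ b, ClubIn b ν.ord → ∃ i < c.ord, 𝒞 i ⊆ b }

/-- `𝒟(ν, μ) = cf([ν]^μ, ⊇)`: the least size of a family of `μ`-sized subsets of `ν`
such that every `μ`-sized subset of `ν` contains a member of the family. -/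
noncomputable def DD (ν μ : Cardinal) : Cardinal :=
  sInf { c : Cardinal | ∃ 𝒟 : Ordinal → Set Ordinal,
    (∀ i < c.ord, 𝒟 i ⊆ Set.Iio ν.ord ∧ (otp (𝒟 i)).card = μ) ∧
    ∀ a : Set Ordinal, a ⊆ Set.Iio ν.ord → (otp a).card = μ → ∃ i < c.ord, 𝒟 i ⊆ a }

lemma statIn_mono {S S' : Set Ordinal} {o : Ordinal} (h : S ⊆ S') (hS : StatIn S o) :
    StatIn S' o := fun C hC => ((hS C hC).imp fun _x hx => ⟨h hx.1, hx.2⟩)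

lemma unbIn_mono {C C' : Set Ordinal} {o : Ordinal} (h : C ⊆ C') (hC : UnbIn C o) : UnbIn C' o :=
  fun β hβ => let ⟨γ, hγ, h1, h2⟩ := hC β hβ; ⟨γ, h hγ, h1, h2⟩

lemma ord_lt_add_one (a : Ordinal) : a < a + 1 := by
  rw [Ordinal.add_one_eq_succ]; exact Order.lt_succ a

lemma ord_add_one_le {a b : Ordinal} (h : a < b) : a + 1 ≤ b := by
  rw [Ordinal.add_one_eq_succ]; exact Order.succ_le_of_lt h

lemma ord_add_one_lt {a o : Ordinal} (ho : Order.IsSuccLimit o) (h : a < o) : a + 1 < o := by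
  rw [Ordinal.add_one_eq_succ]; exact ho.succ_lt h

lemma clubIn_iInter {ι : Type u} (κ : Cardinal) (hκ : κ.IsRegular) (hκ1 : ℵ₀ < κ)
    (C : ι → Set Ordinal) (hC : ∀ i, ClubIn (C i) κ.ord) (hι : #ι < κ) :
    ClubIn (Set.Iio κ.ord ∩ ⋂ i, C i) κ.ord := by
  have hlim : Order.IsSuccLimit κ.ord := Cardinal.isSuccLimit_ord hκ.aleph0_le
  have hcof : κ.ord.cof = κ := hκ.cof_eq
  have hF : ∀ (i : ι) (β : Ordinal), ∃ γ, γ < κ.ord ∧ (β < κ.ord → γ ∈ C i ∧ β < γ) := by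
    intro i β
    by_cases h : β < κ.ord
    · obtain ⟨γ, hγ, h1, h2⟩ := (hC i).2.2 β h
      exact ⟨γ, h2, fun _ => ⟨hγ, h1⟩⟩
    · exact ⟨0, hlim.pos, fun hb => absurd hb h⟩
  choose F hF1 hF2 using hF
  refine ⟨Set.inter_subset_left, ?_, ?_⟩
  · intro β hβ h0 hu
    refine ⟨hβ, Set.mem_iInter.2 fun i => (hC i).2.1 β hβ h0 (unbIn_mono ?_ hu)⟩
    exact Set.inter_subset_right.trans (Set.iInter_subset _ i)
  · intro β hβ
    set b : ℕ → Ordinal := fun n => Nat.rec (β + 1)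
      (fun _ prev => max (prev + 1) (⨆ i, F i prev)) n with hb
    have hb0 : b 0 = β + 1 := rfl
    have hbs : ∀ n, b (n+1) = max (b n + 1) (⨆ i, F i (b n)) := fun n => rfl
    have hblt : ∀ n, b n < κ.ord := by
      intro n; induction n with
      | zero => exact ord_add_one_lt hlim hβ
      | succ n ih =>
        rw [hbs]
        exact max_lt (ord_add_one_lt hlim ih)
          (Ordinal.iSup_lt_ord (by rwa [hcof]) fun i => hF1 i (b n))
    have hmono : ∀ n, b n < b (n+1) := fun n =>
      lt_of_lt_of_le (ord_lt_add_one (b n)) (by rw [hbs]; exact le_max_left _ _)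
    set β' := ⨆ n, b n with hβ'
    have hβ'lt : β' < κ.ord :=
      Ordinal.iSup_lt_ord_lift (by rw [hcof]; simpa using hκ1) hblt
    have hle : ∀ n, b n ≤ β' := fun n => le_ciSup (Ordinal.bddAbove_range _) n
    have hββ' : β < β' := lt_of_lt_of_le (ord_lt_add_one β) (hb0 ▸ hle 0)
    have hpos : 0 < β' := lt_of_le_of_lt (zero_le : (0 : Ordinal) ≤ β) hββ'
    have hmem : ∀ i, β' ∈ C i := by
      intro i
      refine (hC i).2.1 β' hβ'lt hpos ?_
      intro δ hδ
      obtain ⟨n, hn⟩ : ∃ n, δ < b n := by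
        by_contra h; push_neg at h
        exact absurd (ciSup_le h) (not_le.2 hδ)
      refine ⟨F i (b n), (hF2 i (b n) (hblt n)).1,
        hn.trans (hF2 i (b n) (hblt n)).2, ?_⟩
      calc F i (b n) ≤ ⨆ j, F j (b n) := le_ciSup (Ordinal.bddAbove_range _) i
        _ ≤ b (n+1) := by rw [hbs]; exact le_max_right _ _
        _ < b (n+2) := hmono (n+1)
        _ ≤ β' := hle (n+2)
    exact ⟨β', ⟨hβ'lt, Set.mem_iInter.2 hmem⟩, hββ', hβ'lt⟩

lemma exists_club_seq {ν : Cardinal} (hν : ν.IsRegular) {α : Ordinal} (hα : α.cof = ν) :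
    ∃ e : Ordinal → Ordinal, StrictMonoOn e (Set.Iio ν.ord) ∧ (∀ ξ < ν.ord, e ξ < α) ∧
      ClubIn (e '' Set.Iio ν.ord) α := by
  have hνlim : Order.IsSuccLimit ν.ord := Cardinal.isSuccLimit_ord hν.aleph0_le
  have hαlim : Order.IsSuccLimit α := Ordinal.aleph0_le_cof.1 (by rw [hα]; exact hν.aleph0_le)
  obtain ⟨f, hf⟩ := Ordinal.exists_fundamental_sequence α
  have hco : α.cof.ord = ν.ord := by rw [hα]
  set g : Ordinal → Ordinal :=
    fun η => if h : η < ν.ord then f η (by rw [hco]; exact h) else 0 with hg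
  have hg1 : ∀ {η ξ : Ordinal}, η < ξ → ξ < ν.ord → g η < g ξ := by
    intro η ξ h1 h2
    rw [hg]; simp only [dif_pos (h1.trans h2), dif_pos h2]
    exact hf.2.1 _ _ h1
  have hg2 : ∀ η < ν.ord, g η < α := by
    intro η h
    rw [hg]; simp only [dif_pos h]
    conv_rhs => rw [← hf.2.2]
    exact Ordinal.lt_blsub _ _ _
  have hg3 : ∀ β < α, ∃ η < ν.ord, β ≤ g η := by
    intro β hβ
    conv at hβ => rw [← hf.2.2]
    obtain ⟨i, hi, h⟩ := Ordinal.lt_blsub_iff.1 hβ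
    have hi' : i < ν.ord := by rw [← hco]; exact hi
    refine ⟨i, hi', ?_⟩
    rw [hg]; simp only [dif_pos hi']; exact h
  set e : Ordinal → Ordinal :=
    fun ξ => if ξ = 0 then g 0 else Ordinal.bsup ξ (fun η _ => g η + 1) with he
  have heE : ∀ {ξ : Ordinal}, ξ ≠ 0 → e ξ = Ordinal.bsup ξ (fun η _ => g η + 1) := by
    intro ξ h; rw [he]; simp [h]
  have he0 : e 0 = g 0 := by rw [he]; simp
  have hle_g : ∀ ξ < ν.ord, e ξ ≤ g ξ := by
    intro ξ hξ
    rcases eq_or_ne ξ 0 with rfl | h0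
    · rw [he0]
    · rw [heE h0]
      exact Ordinal.bsup_le fun η hη => ord_add_one_le (hg1 hη hξ)
  have hkey : ∀ {η ξ : Ordinal}, η < ξ → g η + 1 ≤ e ξ := by
    intro η ξ h
    have h0 : ξ ≠ 0 := fun hc => by simp [hc] at h
    rw [heE h0]
    exact Ordinal.le_bsup _ η h
  have hstrict : StrictMonoOn e (Set.Iio ν.ord) := by
    intro x hx y hy hxy
    exact lt_of_le_of_lt (hle_g x hx) (lt_of_lt_of_le (ord_lt_add_one (g x)) (hkey hxy))
  have helt : ∀ ξ < ν.ord, e ξ < α := by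
    intro ξ hξ
    rcases eq_or_ne ξ 0 with rfl | h0
    · rw [he0]; exact hg2 0 hνlim.pos
    · rw [heE h0]
      refine Ordinal.bsup_lt_ord ?_ fun η hη => ?_
      · rw [hα]; exact (Cardinal.lt_ord).1 hξ
      · exact ord_add_one_lt hαlim (hg2 η (hη.trans hξ))
  have hunb : UnbIn (e '' Set.Iio ν.ord) α := by
    intro β hβ
    obtain ⟨η, hη, hβη⟩ := hg3 β hβ
    have hη1 : η + 1 < ν.ord := ord_add_one_lt hνlim hη
    refine ⟨e (η + 1), ⟨η + 1, hη1, rfl⟩, ?_, helt _ hη1⟩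
    exact lt_of_lt_of_le (lt_of_le_of_lt hβη (ord_lt_add_one (g η)))
      (hkey (ord_lt_add_one η))
  have hcl : ClosedIn (e '' Set.Iio ν.ord) α := by
    intro β hβ h0 hu
    set S : Set Ordinal := {ξ | ξ < ν.ord ∧ e ξ < β} with hS
    obtain ⟨γb, ⟨ζb, hζb, rfl⟩, hβγ, hγα⟩ := hunb β hβ
    have hbdd : ∀ ξ ∈ S, ξ < ζb := by
      intro ξ hξ
      by_contra h; push_neg at h
      have hle : e ζb ≤ e ξ := by
        rcases eq_or_lt_of_le h with rfl | h'
        · exact le_rfl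
        · exact le_of_lt (hstrict hζb hξ.1 h')
      exact absurd (lt_of_lt_of_le hβγ hle) (not_lt.2 (le_of_lt hξ.2))
    have hnomax : ∀ ξ ∈ S, ξ + 1 ∈ S := by
      intro ξ hξ
      obtain ⟨γ, ⟨ζ, hζ, rfl⟩, h1, h2⟩ := hu (e ξ) hξ.2
      have hξζ : ξ < ζ := (hstrict.lt_iff_lt hξ.1 hζ).1 h1
      have hξ1 : ξ + 1 < ν.ord := ord_add_one_lt hνlim hξ.1
      refine ⟨hξ1, ?_⟩
      have hle : e (ξ + 1) ≤ e ζ := by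
        rcases eq_or_lt_of_le (ord_add_one_le hξζ) with rfl | h'
        · exact le_rfl
        · exact le_of_lt (hstrict hξ1 hζ h')
      exact lt_of_le_of_lt hle h2
    obtain ⟨γ0, ⟨ζ0, hζ0, rfl⟩, h01, h02⟩ := hu 0 h0
    have hSne : S.Nonempty := ⟨ζ0, hζ0, h02⟩
    set ξ₀ := sSup ((fun ξ => ξ + 1) '' S) with hξ₀
    have hbddA : BddAbove ((fun ξ => ξ + 1) '' S) := by
      refine ⟨ζb, ?_⟩
      rintro _ ⟨ξ, hξ, rfl⟩
      exact ord_add_one_le (hbdd ξ hξ)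
    have hξ₀le : ξ₀ ≤ ζb := csSup_le (hSne.image _) (by
      rintro _ ⟨ξ, hξ, rfl⟩; exact ord_add_one_le (hbdd ξ hξ))
    have hξ₀lt : ξ₀ < ν.ord := lt_of_le_of_lt hξ₀le hζb
    have hξ₀pos : ξ₀ ≠ 0 := by
      have : ζ0 + 1 ≤ ξ₀ := le_csSup hbddA ⟨ζ0, ⟨hζ0, h02⟩, rfl⟩
      exact fun hc => by
        rw [hc] at this
        exact absurd (lt_of_lt_of_le (lt_of_le_of_lt (zero_le : (0 : Ordinal) ≤ ζ0) (ord_lt_add_one ζ0)) this)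
          (lt_irrefl 0)
    have h1 : β ≤ e ξ₀ := by
      by_contra h; push_neg at h
      have hmem : ξ₀ ∈ S := ⟨hξ₀lt, h⟩
      have : ξ₀ + 1 ≤ ξ₀ := le_csSup hbddA ⟨ξ₀, hmem, rfl⟩
      exact absurd this (not_le.2 (ord_lt_add_one ξ₀))
    have h2 : e ξ₀ ≤ β := by
      rw [heE hξ₀pos]
      refine Ordinal.bsup_le fun η hη => ?_
      obtain ⟨_, ⟨ξ, hξS, rfl⟩, hηξ⟩ := exists_lt_of_lt_csSup (hSne.image _) hη
      have hξ1S := hnomax ξ hξS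
      have hb : ξ + 1 ≠ 0 := fun hc => by
        exact absurd (hc ▸ ord_lt_add_one ξ) not_lt_zero
      have : g η + 1 ≤ e (ξ + 1) := by
        rw [heE hb]; exact Ordinal.le_bsup _ η hηξ
      exact this.trans (le_of_lt hξ1S.2)
    exact ⟨ξ₀, hξ₀lt, le_antisymm h2 h1⟩
  exact ⟨e, hstrict, helt, fun x ⟨ξ, hξ, hx⟩ => hx ▸ helt ξ hξ, hcl, hunb⟩

theorem statement18 (ν lam κ : Cardinal) (hν : ν.IsRegular) (hκ : κ.IsRegular)
    (hlam : Cardinal.aleph0 ≤ lam)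
    (h1 : ν < lam) (h2 : lam ^ ν = lam) (h3 : lam < κ) (h4 : κ ≤ 2 ^ lam) :
    SNRm κ.ord ν (Ecof κ.ord ν) := by
  intro T₀ hT₀sub hT₀stat
  have hνlim : Order.IsSuccLimit ν.ord := Cardinal.isSuccLimit_ord hν.aleph0_le
  set L := lam.ord.ToType with hLdef
  set N := ν.ord.ToType with hNdef
  have hLcard : #L = lam := by rw [hLdef, Cardinal.mk_toType, Cardinal.card_ord]
  have hNcard : #N = ν := by rw [hNdef, Cardinal.mk_toType, Cardinal.card_ord]
  have hLne : Nonempty L := Ordinal.toType_nonempty_iff_ne_zero.2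
    (Cardinal.isSuccLimit_ord hlam).pos.ne'
  have hNne : Nonempty N := Ordinal.toType_nonempty_iff_ne_zero.2 hνlim.pos.ne'
  -- the injection coding ordinals below κ.ord as subsets of L
  have hKle : #(κ.ord.ToType) ≤ #(Set L) := by
    rw [Cardinal.mk_toType, Cardinal.card_ord, Cardinal.mk_set, hLcard]
    exact h4
  obtain ⟨J⟩ := (Cardinal.le_def _ _).1 hKle
  set X : Ordinal → Set L :=
    fun β => if h : β < κ.ord then J (Ordinal.ToType.mk (o := κ.ord) ⟨β, h⟩) else ∅ with hX
  have hXinj : ∀ β γ, β < κ.ord → γ < κ.ord → X β = X γ → β = γ := by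
    intro β γ hβ hγ h
    rw [hX] at h; simp only [dif_pos hβ, dif_pos hγ] at h
    have h' := (Ordinal.ToType.mk (o := κ.ord)).injective (J.injective h)
    exact congrArg Subtype.val h'
  have hEc : ∀ α ∈ T₀, α < κ.ord ∧ α.cof = ν := fun α h => (hT₀sub h).2
  -- the club sequences
  have hclch : ∀ α : Ordinal, ∃ e : Ordinal → Ordinal, α ∈ T₀ →
      StrictMonoOn e (Set.Iio ν.ord) ∧ (∀ ξ < ν.ord, e ξ < α) ∧
      ClubIn (e '' Set.Iio ν.ord) α := by
    intro α
    by_cases h : α ∈ T₀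
    · obtain ⟨e, he⟩ := exists_club_seq hν (hEc α h).2
      exact ⟨e, fun _ => he⟩
    · exact ⟨id, fun h' => absurd h' h⟩
  choose e he using hclch
  have heκ : ∀ α ∈ T₀, ∀ ζ < ν.ord, e α ζ < κ.ord := fun α hα ζ hζ =>
    lt_trans ((he α hα).2.1 ζ hζ) (hEc α hα).1
  -- difference points
  have hdch : ∀ (α ζ η : Ordinal), ∃ l : L,
      α ∈ T₀ → ζ < η → η < ν.ord → ¬(l ∈ X (e α ζ) ↔ l ∈ X (e α η)) := by
    intro α ζ η
    by_cases h : α ∈ T₀ ∧ ζ < η ∧ η < ν.ord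
    · obtain ⟨hh1, hh2, hh3⟩ := h
      have hζν : ζ < ν.ord := hh2.trans hh3
      have hne : e α ζ ≠ e α η := ne_of_lt ((he α hh1).1 hζν hh3 hh2)
      have hXne : X (e α ζ) ≠ X (e α η) := fun hc =>
        hne (hXinj _ _ (heκ α hh1 ζ hζν) (heκ α hh1 η hh3) hc)
      have hex : ∃ l, ¬(l ∈ X (e α ζ) ↔ l ∈ X (e α η)) := by
        by_contra hc; push_neg at hc
        exact hXne (Set.ext hc)
      obtain ⟨l, hl⟩ := hex
      exact ⟨l, fun _ _ _ => hl⟩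
    · exact ⟨Classical.arbitrary L, fun a b c => absurd ⟨a, b, c⟩ h⟩
  choose d hd using hdch
  -- conversions between N and ordinals below ν.ord
  set ordOf : N → Ordinal := fun n => ((Ordinal.ToType.mk (o := ν.ord)).symm n : Set.Iio ν.ord).1
    with hordOf
  set elOf : Ordinal → N := fun ζ =>
    if h : ζ < ν.ord then Ordinal.ToType.mk (o := ν.ord) ⟨ζ, h⟩ else Classical.arbitrary N with helOf
  have hroundtrip : ∀ ζ < ν.ord, ordOf (elOf ζ) = ζ := by
    intro ζ hζ
    rw [helOf, hordOf]; simp only [dif_pos hζ, OrderIso.symm_apply_apply]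
  -- the coded data
  set Dd : Ordinal → (N × N → L) := fun α p => d α (ordOf p.1) (ordOf p.2) with hDd
  set Pat : (N × N → L) → Ordinal → Set (N × N) := fun dd β => {p | dd p ∈ X β} with hPat
  set tfun : Ordinal → N → Set (N × N) :=
    fun α n => Pat (Dd α) (e α (ordOf n)) with htfun
  set Φ : (N × N → L) × (N → Set (N × N)) → Ordinal → Ordinal :=
    fun D β => sInf {ζ | ζ < ν.ord ∧ D.2 (elOf ζ) = Pat D.1 β} with hΦ
  have hΦlt : ∀ D β, Φ D β < ν.ord := by
    intro D β
    by_cases h : {ζ | ζ < ν.ord ∧ D.2 (elOf ζ) = Pat D.1 β}.Nonempty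
    · exact (csInf_mem h).1
    · show sInf {ζ | ζ < ν.ord ∧ D.2 (elOf ζ) = Pat D.1 β} < ν.ord
      rw [Set.not_nonempty_iff_eq_empty.1 h, Ordinal.sInf_empty]
      exact hνlim.pos
  -- recovery of the index from the code
  have hrec : ∀ α ∈ T₀, ∀ ζ < ν.ord, Φ (Dd α, tfun α) (e α ζ) = ζ := by
    intro α hα ζ hζ
    have hset : {ζ' | ζ' < ν.ord ∧ tfun α (elOf ζ') = Pat (Dd α) (e α ζ)} = {ζ} := by
      ext ζ'
      simp only [Set.mem_setOf_eq, Set.mem_singleton_iff]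
      constructor
      · rintro ⟨hζ', hfun⟩
        by_contra hne
        rcases lt_or_gt_of_ne hne with hlt | hgt
        · have hiff := Set.ext_iff.1 hfun (elOf ζ', elOf ζ)
          simp only [htfun, hPat, Set.mem_setOf_eq] at hiff
          rw [hroundtrip ζ' hζ'] at hiff
          have hDp : Dd α (elOf ζ', elOf ζ) = d α ζ' ζ := by
            simp only [hDd]; rw [hroundtrip ζ' hζ', hroundtrip ζ hζ]
          rw [hDp] at hiff
          exact hd α ζ' ζ hα hlt hζ hiff
        · have hiff := Set.ext_iff.1 hfun (elOf ζ, elOf ζ')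
          simp only [htfun, hPat, Set.mem_setOf_eq] at hiff
          rw [hroundtrip ζ' hζ'] at hiff
          have hDp : Dd α (elOf ζ, elOf ζ') = d α ζ ζ' := by
            simp only [hDd]; rw [hroundtrip ζ' hζ', hroundtrip ζ hζ]
          rw [hDp] at hiff
          exact hd α ζ ζ' hα hgt hζ' hiff.symm
      · rintro rfl
        refine ⟨hζ, ?_⟩
        simp only [htfun]
        rw [hroundtrip _ hζ]
    show sInf {ζ' | ζ' < ν.ord ∧ tfun α (elOf ζ') = Pat (Dd α) (e α ζ)} = ζ
    rw [hset, csInf_singleton]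
  -- pigeonhole over fewer than κ codes
  set TD : (N × N → L) × (N → Set (N × N)) → Set Ordinal :=
    fun D => {α | α ∈ T₀ ∧ Dd α = D.1 ∧ tfun α = D.2} with hTD
  have hcard : #((N × N → L) × (N → Set (N × N))) < κ := by
    have h2lam : (2 : Cardinal) ≤ lam := by
      refine le_trans ?_ hlam
      exact_mod_cast (Cardinal.nat_lt_aleph0 2).le
    have hNN : #(N × N) = ν := by
      rw [Cardinal.mk_prod, Cardinal.lift_id, hNcard, Cardinal.mul_eq_self hν.aleph0_le]
    have hA : #(N × N → L) = lam := by
      rw [← Cardinal.power_def, hLcard, hNN, h2]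
    have hSetNN : #(Set (N × N)) = 2 ^ ν := by rw [Cardinal.mk_set, hNN]
    have hB : #(N → Set (N × N)) ≤ lam := by
      rw [← Cardinal.power_def, hSetNN, hNcard, ← Cardinal.power_mul,
        Cardinal.mul_eq_self hν.aleph0_le]
      calc (2 : Cardinal) ^ ν ≤ lam ^ ν := Cardinal.power_le_power_right h2lam
        _ = lam := h2
    calc #((N × N → L) × (N → Set (N × N)))
        = #(N × N → L) * #(N → Set (N × N)) := by
          rw [Cardinal.mk_prod, Cardinal.lift_id, Cardinal.lift_id]
      _ ≤ lam * lam := by rw [hA]; exact mul_le_mul_right hB lam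
      _ = lam := Cardinal.mul_eq_self hlam
      _ < κ := h3
  have hstatD : ∃ D, StatIn (TD D) κ.ord := by
    by_contra hcon; push_neg at hcon
    have hch : ∀ D, ∃ C, ClubIn C κ.ord ∧ TD D ∩ C = ∅ := by
      intro D
      have hthis := hcon D
      unfold StatIn at hthis
      push_neg at hthis
      obtain ⟨C, hC1, hC2⟩ := hthis
      exact ⟨C, hC1, hC2⟩
    choose Cc hCc1 hCc2 using hch
    have hclub := clubIn_iInter κ hκ (lt_of_le_of_lt hlam h3) Cc hCc1 hcard
    obtain ⟨α, hα1, hα2⟩ := hT₀stat _ hclub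
    have hmemTD : α ∈ TD (Dd α, tfun α) := ⟨hα1, rfl, rfl⟩
    have hmemC : α ∈ Cc (Dd α, tfun α) := Set.mem_iInter.1 hα2.2 (Dd α, tfun α)
    exact Set.eq_empty_iff_forall_notMem.1 (hCc2 (Dd α, tfun α)) α ⟨hmemTD, hmemC⟩
  obtain ⟨D, hD⟩ := hstatD
  refine ⟨Φ D, fun β _ => hΦlt D β, statIn_mono ?_ hD⟩
  intro α hα
  obtain ⟨hαT₀, hD1, hD2⟩ := hα
  have hDeq : (Dd α, tfun α) = D := by rw [hD1, hD2]
  refine ⟨hαT₀, e α '' Set.Iio ν.ord, (he α hαT₀).2.2, ?_⟩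
  rintro x ⟨ζ, hζ, rfl⟩ y ⟨η, hη, rfl⟩ hxy
  have hζη : ζ < η := ((he α hαT₀).1.lt_iff_lt hζ hη).1 hxy
  rw [← hDeq, hrec α hαT₀ ζ hζ, hrec α hαT₀ η hη]
  exact hζη
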